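/- The Shannon entropy (in bits) of the half-integer quantization of a standard Gaussian is at most 4: with ρ_i the standard Gaussian probability of the cell [i/2 - 1/4, i/2 + 1/4], one has (1/log 2)·∑_{i ∈ ℤ} (-ρ_i·log ρ_i) ≤ 4. -/

import Mathlib

open MeasureTheory ProbabilityTheory Real Set Filter Topology
open scoped NNReal ENNReal

namespace GQ


lemma integrable_mul_exp : Integrable (fun x : ℝ => x * rexp (-x^2/2)) := by
  have := integrable_mul_exp_neg_mul_sq (b := 1/2) (by norm_num)
  simpa only [show ∀ x : ℝ, -(1/2 : ℝ) * x ^ 2 = -x^2/2 from fun x => by ring] using this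

lemma int_Ioi : ∫ x in Ioi (0:ℝ), x * rexp (-x^2/2) = 1 := by
  have h : ∫ x in Ioi (0:ℝ), x * rexp (-x^2/2)
      = 0 - (fun x : ℝ => -rexp (-x^2/2)) 0 := by
    apply integral_Ioi_of_hasDerivAt_of_tendsto (f := fun x : ℝ => -rexp (-x^2/2)) (f' := fun x : ℝ => x * rexp (-x^2/2))
    · exact Continuous.continuousWithinAt (by continuity)
    · intro x _
      have h0 : HasDerivAt (fun x : ℝ => x^2) (2*x) x := by simpa using hasDerivAt_pow 2 x
      have h1 : HasDerivAt (fun x : ℝ => -x^2/2) (-(2*x)/2) x := (h0.neg).div_const 2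
      have h2 := (h1.exp).neg
      convert h2 using 1
      · rfl
      · ring
    · exact integrable_mul_exp.integrableOn
    · have t0 : Tendsto (fun x : ℝ => x^2/2) atTop atTop :=
        (tendsto_pow_atTop two_ne_zero).atTop_div_const two_pos
      have t1 : Tendsto (fun x : ℝ => -x^2/2) atTop atBot := by
        simpa only [neg_div, Function.comp_def] using tendsto_neg_atTop_atBot.comp t0
      have t2 : Tendsto (fun x : ℝ => -rexp (-x^2/2)) atTop (𝓝 (-0)) :=
        (Real.tendsto_exp_atBot.comp t1).neg
      simpa using t2
  simpa using h

lemma int_abs : ∫ x : ℝ, |x| * rexp (-x^2/2) = 2 := by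
  have : ∀ x : ℝ, |x| * rexp (-x^2/2) = (fun t : ℝ => t * rexp (-t^2/2)) |x| := by
    intro x; simp [sq_abs]
  rw [funext this, integral_comp_abs (f := fun t : ℝ => t * rexp (-t^2/2)), int_Ioi]
  norm_num



lemma phi_eq (x : ℝ) : gaussianPDFReal 0 1 x = (Real.sqrt (2*π))⁻¹ * rexp (-x^2/2) := by
  simp [gaussianPDFReal]

lemma gauss_eq : gaussianReal 0 1
    = volume.withDensity (fun x => ((Real.toNNReal (gaussianPDFReal 0 1 x) : ℝ≥0) : ℝ≥0∞)) := by
  rw [gaussianReal_of_var_ne_zero 0 one_ne_zero]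
  rfl

lemma integral_gauss (g : ℝ → ℝ) :
    ∫ x, g x ∂(gaussianReal 0 1) = ∫ x, gaussianPDFReal 0 1 x * g x := by
  rw [gauss_eq, integral_withDensity_eq_integral_smul
    ((measurable_gaussianPDFReal 0 1).real_toNNReal) g]
  congr 1
  funext x
  simp [NNReal.smul_def, Real.coe_toNNReal _ (gaussianPDFReal_nonneg 0 1 x)]

lemma integrable_gauss (g : ℝ → ℝ)
    (h : Integrable (fun x => gaussianPDFReal 0 1 x * g x)) :
    Integrable g (gaussianReal 0 1) := by
  rw [gauss_eq]
  refine (integrable_withDensity_iff_integrable_smul (E := ℝ)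
    ((measurable_gaussianPDFReal 0 1).real_toNNReal)).mpr ?_
  apply h.congr
  filter_upwards with x
  simp [NNReal.smul_def, Real.coe_toNNReal _ (gaussianPDFReal_nonneg 0 1 x)]

lemma integrable_abs_mul : Integrable (fun x : ℝ => |x| * rexp (-x^2/2)) := by
  apply integrable_mul_exp.abs.congr
  filter_upwards with x
  rw [abs_mul, abs_of_pos (exp_pos _)]

lemma integrable_phi_abs : Integrable (fun x : ℝ => gaussianPDFReal 0 1 x * |x|) := by
  apply (integrable_abs_mul.const_mul ((Real.sqrt (2*π))⁻¹)).congr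
  filter_upwards with x
  rw [phi_eq]; ring

lemma integral_phi_abs : ∫ x : ℝ, gaussianPDFReal 0 1 x * |x| = (Real.sqrt (2*π))⁻¹ * 2 := by
  rw [show (fun x : ℝ => gaussianPDFReal 0 1 x * |x|)
      = fun x : ℝ => (Real.sqrt (2*π))⁻¹ * (|x| * rexp (-x^2/2)) from
    funext fun x => by rw [phi_eq]; ring]
  rw [integral_const_mul, int_abs]

lemma integrable_f2 : Integrable (fun x : ℝ => 2*|x| + 1/2) (gaussianReal 0 1) := by
  apply integrable_gauss
  have h : (fun x : ℝ => gaussianPDFReal 0 1 x * (2*|x|+1/2))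
      = fun x : ℝ => 2 * (gaussianPDFReal 0 1 x * |x|) + (1/2) * gaussianPDFReal 0 1 x :=
    funext fun x => by ring
  rw [h]
  exact (integrable_phi_abs.const_mul 2).add ((integrable_gaussianPDFReal 0 1).const_mul (1/2))

lemma integral_f2 : ∫ x, (2*|x| + 1/2) ∂(gaussianReal 0 1) ≤ 21/10 := by
  rw [integral_gauss]
  have h : (fun x : ℝ => gaussianPDFReal 0 1 x * (2*|x|+1/2))
      = fun x : ℝ => 2 * (gaussianPDFReal 0 1 x * |x|) + (1/2) * gaussianPDFReal 0 1 x :=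
    funext fun x => by ring
  rw [h, integral_add (integrable_phi_abs.const_mul 2)
      ((integrable_gaussianPDFReal 0 1).const_mul (1/2)),
    integral_const_mul, integral_const_mul, integral_phi_abs,
    integral_gaussianPDFReal_eq_one 0 one_ne_zero]
  have h5 : (5/2 : ℝ) ≤ Real.sqrt (2*π) := by
    rw [show (5/2:ℝ) = Real.sqrt ((5/2)^2) from (Real.sqrt_sq (by norm_num)).symm]
    apply Real.sqrt_le_sqrt
    nlinarith [Real.pi_gt_d6]
  have h6 : (Real.sqrt (2*π))⁻¹ ≤ 2/5 := by
    have := inv_anti₀ (by norm_num : (0:ℝ) < 5/2) h5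
    simpa using this
  linarith


noncomputable def rho (i : ℤ) : ℝ :=
  ((gaussianReal 0 1) (Set.Icc ((i:ℝ)/2 - 1/4) ((i:ℝ)/2 + 1/4))).toReal

def cell (i : ℤ) : Set ℝ := Set.Ico ((i:ℝ)/2 - 1/4) ((i:ℝ)/2 + 1/4)

lemma meas_Icc_eq (i : ℤ) :
    (gaussianReal 0 1) (Set.Icc ((i:ℝ)/2 - 1/4) ((i:ℝ)/2 + 1/4))
      = (gaussianReal 0 1) (cell i) := by
  have hsing : (gaussianReal 0 1) {(i:ℝ)/2 + 1/4} = 0 :=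
    gaussianReal_absolutelyContinuous 0 one_ne_zero Real.volume_singleton
  apply le_antisymm
  · have hsub : Set.Icc ((i:ℝ)/2 - 1/4) ((i:ℝ)/2 + 1/4)
        ⊆ cell i ∪ {(i:ℝ)/2 + 1/4} := by
      intro x hx
      rcases eq_or_lt_of_le hx.2 with h | h
      · exact Or.inr (by simp [h])
      · exact Or.inl ⟨hx.1, h⟩
    calc (gaussianReal 0 1) (Set.Icc ((i:ℝ)/2 - 1/4) ((i:ℝ)/2 + 1/4))
        ≤ (gaussianReal 0 1) (cell i ∪ {(i:ℝ)/2 + 1/4}) := measure_mono hsub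
      _ ≤ (gaussianReal 0 1) (cell i) + (gaussianReal 0 1) {(i:ℝ)/2 + 1/4} := measure_union_le _ _
      _ = (gaussianReal 0 1) (cell i) := by rw [hsing, add_zero]
  · exact measure_mono Set.Ico_subset_Icc_self

lemma cell_disj : Pairwise (Function.onFun Disjoint cell) := by
  have key : ∀ i j : ℤ, i < j → Disjoint (cell i) (cell j) := by
    intro i j hij
    rw [cell, cell, Set.Ico_disjoint_Ico]
    have h : (i:ℝ) + 1 ≤ j := by exact_mod_cast hij
    refine le_trans (min_le_left _ _) (le_trans ?_ (le_max_right _ _))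
    linarith
  intro i j hij
  rcases lt_or_gt_of_ne hij with h | h
  · exact key _ _ h
  · exact (key _ _ h).symm

lemma cell_union : (⋃ i, cell i) = Set.univ := by
  ext x
  simp only [Set.mem_iUnion, Set.mem_univ, iff_true, cell, Set.mem_Ico]
  refine ⟨⌊2*x + 1/2⌋, ?_, ?_⟩
  · have h := Int.floor_le (2*x + 1/2)
    linarith
  · have h := Int.lt_floor_add_one (2*x + 1/2)
    linarith

lemma rho_eq_setIntegral (i : ℤ) :
    rho i = ∫ _x in cell i, (1:ℝ) ∂(gaussianReal 0 1) := by
  rw [setIntegral_const, smul_eq_mul, mul_one, rho, meas_Icc_eq, measureReal_def]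

lemma hasSum_rho : HasSum rho 1 := by
  have h := hasSum_integral_iUnion (μ := gaussianReal 0 1) (s := cell) (f := fun _ => (1:ℝ))
    (fun i => measurableSet_Ico) cell_disj
    ((integrable_const (1:ℝ)).integrableOn)
  rw [cell_union] at h
  have h1 : (∫ _x in Set.univ, (1:ℝ) ∂(gaussianReal 0 1)) = 1 := by
    simp
  rw [h1] at h
  rw [show rho = fun i => ∫ _x in cell i, (1:ℝ) ∂(gaussianReal 0 1) from
    funext rho_eq_setIntegral]
  exact h

noncomputable def bnd (i : ℤ) : ℝ := ∫ x in cell i, (2*|x| + 1/2) ∂(gaussianReal 0 1)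

lemma hasSum_bnd : HasSum bnd (∫ x, (2*|x| + 1/2) ∂(gaussianReal 0 1)) := by
  have h := hasSum_integral_iUnion (μ := gaussianReal 0 1) (s := cell)
    (f := fun x : ℝ => 2*|x| + 1/2)
    (fun i => measurableSet_Ico) cell_disj integrable_f2.integrableOn
  rw [cell_union] at h
  rw [Measure.restrict_univ] at h
  exact h

lemma abs_le_on (i : ℤ) {x : ℝ} (hx : x ∈ cell i) : |(i:ℝ)| ≤ 2*|x| + 1/2 := by
  obtain ⟨h1, h2⟩ := hx
  have h3 : |(i:ℝ)/2 - x| ≤ 1/4 := abs_le.2 ⟨by linarith, by linarith⟩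
  have h4 : |(i:ℝ)/2| ≤ |x| + 1/4 := by
    have he : x + ((i:ℝ)/2 - x) = (i:ℝ)/2 := by ring
    calc |(i:ℝ)/2| = |x + ((i:ℝ)/2 - x)| := by rw [he]
      _ ≤ |x| + |(i:ℝ)/2 - x| := abs_add_le _ _
      _ ≤ |x| + 1/4 := by linarith
  have h5 : |(i:ℝ)/2| = |(i:ℝ)|/2 := by
    rw [abs_div, abs_two]
  linarith

lemma rho_nonneg (i : ℤ) : 0 ≤ rho i := ENNReal.toReal_nonneg

lemma rho_le_one (i : ℤ) : rho i ≤ 1 := by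
  rw [rho]
  have h : (gaussianReal 0 1) (Set.Icc ((i:ℝ)/2 - 1/4) ((i:ℝ)/2 + 1/4)) ≤ 1 := by
    rw [← measure_univ (μ := gaussianReal 0 1)]
    exact measure_mono (Set.subset_univ _)
  have := ENNReal.toReal_mono ENNReal.one_ne_top h
  simpa using this

lemma term_le (i : ℤ) : (i.natAbs : ℝ) * rho i ≤ bnd i := by
  rw [rho_eq_setIntegral]
  have h : (i.natAbs : ℝ) * ∫ _x in cell i, (1:ℝ) ∂(gaussianReal 0 1)
      = ∫ _x in cell i, ((i.natAbs : ℝ)) ∂(gaussianReal 0 1) := by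
    rw [setIntegral_const, setIntegral_const, smul_eq_mul, smul_eq_mul]
    ring
  rw [h]
  apply setIntegral_mono_on
  · exact integrableOn_const (measure_ne_top _ _)
  · exact integrable_f2.integrableOn
  · exact measurableSet_Ico
  · intro x hx
    have h2 := abs_le_on i hx
    rw [Nat.cast_natAbs, Int.cast_abs]
    exact h2

noncomputable def q (i : ℤ) : ℝ := (1/5) * (2/3)^(i.natAbs)

lemma q_pos (i : ℤ) : 0 < q i := by
  rw [q]; positivity

lemma hasSum_q : HasSum q 1 := by
  have hgeo : HasSum (fun n : ℕ => ((2:ℝ)/3)^n) 3 := by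
    have := hasSum_geometric_of_lt_one (by norm_num : (0:ℝ) ≤ 2/3) (by norm_num : (2:ℝ)/3 < 1)
    norm_num at this
    exact this
  have h1 : HasSum (fun n : ℕ => q n) (3/5) := by
    have := hgeo.mul_left (1/5)
    have he : (fun n : ℕ => q n) = fun n : ℕ => (1/5) * ((2:ℝ)/3)^n := by
      funext n; rw [q]; simp
    rw [he, show (3/5:ℝ) = 1/5*3 by norm_num]
    exact this
  have h2 : HasSum (fun n : ℕ => q (-(n+1))) (2/5) := by
    have := hgeo.mul_left (2/15)
    have he : (fun n : ℕ => q (-(n+1))) = fun n : ℕ => (2/15) * ((2:ℝ)/3)^n := by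
      funext n
      rw [q]
      have hn : ((-(n+1) : ℤ)).natAbs = n + 1 := by
        omega
      rw [hn, pow_succ]
      ring
    rw [he, show (2/5:ℝ) = 2/15*3 by norm_num]
    exact this
  have h := h1.of_nat_of_neg_add_one h2
  norm_num at h
  exact h

lemma gibbs {p r c : ℝ} (hp : 0 ≤ p) (hr : 0 < r) (hc : -Real.log r = c) :
    Real.negMulLog p ≤ p * c + (r - p) := by
  rcases eq_or_lt_of_le hp with h | h
  · rw [← h, Real.negMulLog_zero]
    nlinarith
  · have hlog := Real.log_le_sub_one_of_pos (div_pos hr h)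
    rw [Real.log_div hr.ne' h.ne'] at hlog
    have hdiv : p * (r / p) = r := by field_simp
    rw [Real.negMulLog, ← hc]
    nlinarith

lemma main_term (i : ℤ) : Real.negMulLog (rho i) ≤
    Real.log (3/2) * ((i.natAbs : ℝ) * rho i) + ((Real.log 5 - 1) * rho i + q i) := by
  have hc : -Real.log (q i) = (i.natAbs : ℝ) * Real.log (3/2) + Real.log 5 := by
    rw [q, Real.log_mul (by norm_num) (by positivity), Real.log_pow,
      show ((1:ℝ)/5) = (5:ℝ)⁻¹ by norm_num, Real.log_inv,
      Real.log_div (by norm_num : (2:ℝ) ≠ 0) (by norm_num : (3:ℝ) ≠ 0),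
      Real.log_div (by norm_num : (3:ℝ) ≠ 0) (by norm_num : (2:ℝ) ≠ 0)]
    push_cast
    ring
  have h := gibbs (rho_nonneg i) (q_pos i) hc
  refine le_trans h (le_of_eq ?_)
  ring

lemma total : (∑' i : ℤ, Real.negMulLog (rho i)) ≤ 4 * Real.log 2 := by
  have hbs : Summable bnd := hasSum_bnd.summable
  have hA : Summable (fun i : ℤ => (i.natAbs : ℝ) * rho i) :=
    Summable.of_nonneg_of_le (fun i => mul_nonneg (Nat.cast_nonneg _) (rho_nonneg i))
      term_le hbs
  have hrs : Summable rho := hasSum_rho.summable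
  have hqs : Summable q := hasSum_q.summable
  have hg_sum : Summable (fun i : ℤ =>
      Real.log (3/2) * ((i.natAbs : ℝ) * rho i) + ((Real.log 5 - 1) * rho i + q i)) :=
    (hA.mul_left _).add ((hrs.mul_left _).add hqs)
  have hL : Summable (fun i : ℤ => Real.negMulLog (rho i)) :=
    Summable.of_nonneg_of_le
      (fun i => Real.negMulLog_nonneg (rho_nonneg i) (rho_le_one i))
      main_term hg_sum
  have step1 := Summable.tsum_le_tsum main_term hL hg_sum
  have step2 : (∑' i : ℤ,
      (Real.log (3/2) * ((i.natAbs : ℝ) * rho i) + ((Real.log 5 - 1) * rho i + q i)))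
      = Real.log (3/2) * (∑' i : ℤ, (i.natAbs : ℝ) * rho i)
        + ((Real.log 5 - 1) * 1 + 1) := by
    rw [Summable.tsum_add (hA.mul_left _) ((hrs.mul_left _).add hqs),
      tsum_mul_left,
      Summable.tsum_add (hrs.mul_left _) hqs,
      tsum_mul_left, hasSum_rho.tsum_eq, hasSum_q.tsum_eq]
  have hAle : (∑' i : ℤ, (i.natAbs : ℝ) * rho i) ≤ 21/10 := by
    refine le_trans (Summable.tsum_le_tsum term_le hA hbs) ?_
    rw [hasSum_bnd.tsum_eq]
    exact integral_f2
  have hlog32 : (0:ℝ) ≤ Real.log (3/2) := Real.log_nonneg (by norm_num)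
  have step3 : Real.log (3/2) * (∑' i : ℤ, (i.natAbs : ℝ) * rho i)
      ≤ Real.log (3/2) * (21/10) := mul_le_mul_of_nonneg_left hAle hlog32
  have hnum : Real.log (3/2) * (21/10) + ((Real.log 5 - 1) * 1 + 1) ≤ 4 * Real.log 2 := by
    have h1 : Real.log ((3:ℝ)/2) = Real.log 3 - Real.log 2 :=
      Real.log_div (by norm_num) (by norm_num)
    have h2 : Real.log ((3:ℝ)^21 * 5^10) ≤ Real.log ((2:ℝ)^61) :=
      Real.log_le_log (by positivity) (by norm_num)
    rw [Real.log_mul (by positivity) (by positivity), Real.log_pow, Real.log_pow,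
      Real.log_pow] at h2
    push_cast at h2
    linarith
  calc (∑' i : ℤ, Real.negMulLog (rho i)) ≤ _ := step1
    _ = _ := step2
    _ ≤ Real.log (3/2) * (21/10) + ((Real.log 5 - 1) * 1 + 1) := by linarith
    _ ≤ 4 * Real.log 2 := hnum

end GQ

theorem gaussian_quantization_entropy_le_four :
    (1 / Real.log 2) *
        ∑' i : ℤ,
          Real.negMulLog
            (((gaussianReal 0 1)
                (Set.Icc ((i : ℝ) / 2 - 1 / 4) ((i : ℝ) / 2 + 1 / 4))).toReal) ≤ 4 := by
  have hT : (∑' i : ℤ,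
      Real.negMulLog
        (((gaussianReal 0 1)
            (Set.Icc ((i : ℝ) / 2 - 1 / 4) ((i : ℝ) / 2 + 1 / 4))).toReal)) ≤ 4 * Real.log 2 :=
    GQ.total
  have hlog2 : (0:ℝ) < Real.log 2 := Real.log_pos (by norm_num)
  rw [one_div, inv_mul_le_iff₀ hlog2]
  linarith
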